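/- Let p ∈ [2,∞), ε > 0, γ > 0 and set μ_ε = max{1, 1/(4ε)}. Then for all real numbers α, β₁, β₂ ≥ 0 one has (α + β₁)^{p−2} β₁ β₂ ≤ γ^{−1} μ_ε (α + β₁)^{p−2} β₁² + γ ε (α + γ β₂)^{p−2} β₂². -/

import Mathlib

/-- Generalized Young inequality with an extra scaling parameter `γ`: for `p ∈ [2,∞)`,
`ε > 0`, `γ > 0`, `μ_ε = max{1, 1/(4ε)}`, and all `α, β₁, β₂ ≥ 0`,
`(α + β₁)^(p−2) β₁ β₂ ≤ γ⁻¹ μ_ε (α + β₁)^(p−2) β₁² + γ ε (α + γ β₂)^(p−2) β₂²`. -/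
theorem stmt_3 (p : ℝ) (hp : 2 ≤ p) (ε : ℝ) (hε : 0 < ε) (γ : ℝ) (hγ : 0 < γ)
    (α β₁ β₂ : ℝ) (hα : 0 ≤ α) (hβ₁ : 0 ≤ β₁) (hβ₂ : 0 ≤ β₂) :
    (α + β₁) ^ (p - 2) * β₁ * β₂ ≤
      γ⁻¹ * max 1 (1 / (4 * ε)) * ((α + β₁) ^ (p - 2) * β₁ ^ 2) +
        γ * ε * ((α + γ * β₂) ^ (p - 2) * β₂ ^ 2) := by
  set A := (α + β₁) ^ (p - 2) with hAdef
  set B := (α + γ * β₂) ^ (p - 2) with hBdef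
  have hA : 0 ≤ A := Real.rpow_nonneg (by positivity) _
  have hB : 0 ≤ B := Real.rpow_nonneg (by positivity) _
  have hμ1 : (1 : ℝ) ≤ max 1 (1 / (4 * ε)) := le_max_left _ _
  have hμ2 : 1 / (4 * ε) ≤ max 1 (1 / (4 * ε)) := le_max_right _ _
  rcases le_or_gt (γ * β₂) β₁ with h | h
  · -- β₂ ≤ β₁ / γ : the first term alone suffices
    have h1 : A * β₁ * β₂ ≤ γ⁻¹ * (A * β₁ ^ 2) := by
      rw [← sub_nonneg]
      have heq : γ⁻¹ * (A * β₁ ^ 2) - A * β₁ * β₂ = γ⁻¹ * (A * β₁) * (β₁ - γ * β₂) := by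
        field_simp
      rw [heq]
      have : 0 ≤ β₁ - γ * β₂ := by linarith
      positivity
    have h2 : γ⁻¹ * (A * β₁ ^ 2) ≤ γ⁻¹ * max 1 (1 / (4 * ε)) * (A * β₁ ^ 2) := by
      have h3 := mul_le_mul_of_nonneg_left
        (mul_le_mul_of_nonneg_right hμ1 (mul_nonneg hA (sq_nonneg β₁))) (inv_pos.mpr hγ).le
      calc γ⁻¹ * (A * β₁ ^ 2) = γ⁻¹ * (1 * (A * β₁ ^ 2)) := by ring
        _ ≤ γ⁻¹ * (max 1 (1 / (4 * ε)) * (A * β₁ ^ 2)) := h3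
        _ = γ⁻¹ * max 1 (1 / (4 * ε)) * (A * β₁ ^ 2) := by ring
    nlinarith [mul_nonneg (mul_nonneg hγ.le hε.le) (mul_nonneg hB (sq_nonneg β₂))]
  · -- β₁ < γ β₂ : so A ≤ B, and use Young on A β₁ β₂
    have hAB : A ≤ B := by
      apply Real.rpow_le_rpow (by positivity) (by linarith) (by linarith)
    have key : β₁ * β₂ ≤ 1 / (4 * ε * γ) * β₁ ^ 2 + ε * γ * β₂ ^ 2 := by
      rw [← sub_nonneg]
      have heq : 1 / (4 * ε * γ) * β₁ ^ 2 + ε * γ * β₂ ^ 2 - β₁ * β₂ =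
          (β₁ - 2 * ε * γ * β₂) ^ 2 / (4 * ε * γ) := by
        field_simp; ring
      rw [heq]; positivity
    have young : A * β₁ * β₂ ≤ 1 / (4 * ε * γ) * (A * β₁ ^ 2) + ε * γ * (A * β₂ ^ 2) := by
      nlinarith [mul_le_mul_of_nonneg_left key hA]
    have hterm2 : ε * γ * (A * β₂ ^ 2) ≤ γ * ε * (B * β₂ ^ 2) := by
      nlinarith [mul_le_mul_of_nonneg_right hAB (sq_nonneg β₂), mul_pos hε hγ]
    have hterm1 : 1 / (4 * ε * γ) * (A * β₁ ^ 2) ≤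
        γ⁻¹ * max 1 (1 / (4 * ε)) * (A * β₁ ^ 2) := by
      apply mul_le_mul_of_nonneg_right _ (by positivity)
      calc 1 / (4 * ε * γ) = γ⁻¹ * (1 / (4 * ε)) := by field_simp
        _ ≤ γ⁻¹ * max 1 (1 / (4 * ε)) :=
          mul_le_mul_of_nonneg_left hμ2 (inv_pos.mpr hγ).le
    linarith
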